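/- For every integer n, BP(n) − i·BP(n+1) + j·BP(n+2) − ij·BP(n+3) = −16·P(n+3)·1 + 4·q(n+3)·j. -/

import Mathlib

open scoped TensorProduct

noncomputable def bi : ℂ ⊗[ℝ] ℂ := Complex.I ⊗ₜ[ℝ] 1
noncomputable def bj : ℂ ⊗[ℝ] ℂ := (1 : ℂ) ⊗ₜ[ℝ] Complex.I
noncomputable def bij : ℂ ⊗[ℝ] ℂ := Complex.I ⊗ₜ[ℝ] Complex.I

lemma bi_mul_bi : bi * bi = -1 := by
  rw [bi, Algebra.TensorProduct.tmul_mul_tmul, one_mul, Complex.I_mul_I,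
    TensorProduct.neg_tmul, Algebra.TensorProduct.one_def]
lemma bi_mul_bj : bi * bj = bij := by
  rw [bi, bj, bij, Algebra.TensorProduct.tmul_mul_tmul, one_mul, mul_one]
lemma bi_mul_bij : bi * bij = -bj := by
  rw [bi, bij, bj, Algebra.TensorProduct.tmul_mul_tmul, one_mul, Complex.I_mul_I,
    TensorProduct.neg_tmul]
lemma bj_mul_bj : bj * bj = -1 := by
  rw [bj, Algebra.TensorProduct.tmul_mul_tmul, one_mul, Complex.I_mul_I,
    TensorProduct.tmul_neg, Algebra.TensorProduct.one_def]
lemma bj_mul_bij : bj * bij = -bi := by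
  rw [bj, bij, bi, Algebra.TensorProduct.tmul_mul_tmul, one_mul, Complex.I_mul_I,
    TensorProduct.tmul_neg]
lemma bj_mul_bi : bj * bi = bij := by
  rw [bj, bi, bij, Algebra.TensorProduct.tmul_mul_tmul, one_mul, mul_one]
lemma bij_mul_bi : bij * bi = -bj := by
  rw [bij, bi, bj, Algebra.TensorProduct.tmul_mul_tmul, mul_one, Complex.I_mul_I,
    TensorProduct.neg_tmul]
lemma bij_mul_bj : bij * bj = -bi := by
  rw [bij, bj, bi, Algebra.TensorProduct.tmul_mul_tmul, mul_one, Complex.I_mul_I,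
    TensorProduct.tmul_neg]
lemma bij_mul_bij : bij * bij = 1 := by
  rw [bij, Algebra.TensorProduct.tmul_mul_tmul, Complex.I_mul_I,
    TensorProduct.neg_tmul, TensorProduct.tmul_neg, neg_neg, Algebra.TensorProduct.one_def]

lemma pell_q_key (P q : ℤ → ℤ)
    (hP : ∀ n : ℤ, P (n + 2) = 2 * P (n + 1) + P n) (hP0 : P 0 = 0) (hP1 : P 1 = 1)
    (hq : ∀ n : ℤ, q (n + 2) = 2 * q (n + 1) + q n) (hq0 : q 0 = 1) (hq1 : q 1 = 1) :
    ∀ m : ℤ, P m + P (m + 2) = 2 * q (m + 1) := by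
  have main : ∀ m : ℤ, (P m + P (m + 2) = 2 * q (m + 1)) ∧
      (P (m + 1) + P (m + 3) = 2 * q (m + 2)) := by
    intro m
    induction m using Int.induction_on with
    | zero =>
      have h0 := hP 0; have h1 := hP 1; have hq0' := hq 0
      norm_num at *
      constructor <;> omega
    | succ k ih =>
      obtain ⟨ih1, ih2⟩ := ih
      have h0 := hP k
      have h1 := hP (k + 1)
      have h2 := hP (k + 2)
      have hq0' := hq k
      have hq1' := hq (k + 1)
      ring_nf at h0 h1 h2 hq0' hq1' ih1 ih2 ⊢
      constructor <;> linarith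
    | pred k ih =>
      obtain ⟨ih1, ih2⟩ := ih
      have h1 := hP (-(k:ℤ) - 1)
      have h2 := hP (-(k:ℤ))
      have hq1' := hq (-(k:ℤ) - 1)
      have hq2' := hq (-(k:ℤ))
      have h3 := hP (1 - (k:ℤ))
      ring_nf at h1 h2 h3 hq1' hq2' ih1 ih2 ⊢
      constructor <;> linarith
  exact fun m => (main m).1

/-- The bicomplex Pell number `BP n = P n + P (n+1) i + P (n+2) j + P (n+3) ij`. -/
noncomputable def BP (P : ℤ → ℤ) (n : ℤ) : ℂ ⊗[ℝ] ℂ :=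
  (P n : ℝ) • (1 : ℂ ⊗[ℝ] ℂ) + (P (n + 1) : ℝ) • bi + (P (n + 2) : ℝ) • bj +
    (P (n + 3) : ℝ) • bij

theorem bicomplexPell_alt_sum (P q : ℤ → ℤ)
    (hP : ∀ n : ℤ, P (n + 2) = 2 * P (n + 1) + P n) (hP0 : P 0 = 0) (hP1 : P 1 = 1)
    (hq : ∀ n : ℤ, q (n + 2) = 2 * q (n + 1) + q n) (hq0 : q 0 = 1) (hq1 : q 1 = 1)
    (n : ℤ) :
    BP P n - bi * BP P (n + 1) + bj * BP P (n + 2) - bij * BP P (n + 3) =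
      (-16 * (P (n + 3) : ℝ)) • (1 : ℂ ⊗[ℝ] ℂ) + (4 * (q (n + 3) : ℝ)) • bj := by
  have pq : P (n + 2) + P (n + 4) = 2 * q (n + 3) := by
    have := pell_q_key P q hP hP0 hP1 hq hq0 hq1 (n + 2)
    ring_nf at this ⊢; linarith
  have p2 : P (n + 2) = 2 * P (n + 1) + P n := hP n
  have p3 : P (n + 3) = 2 * P (n + 2) + P (n + 1) := by
    have := hP (n + 1); ring_nf at this ⊢; linarith
  have p4 : P (n + 4) = 2 * P (n + 3) + P (n + 2) := by
    have := hP (n + 2); ring_nf at this ⊢; linarith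
  have p5 : P (n + 5) = 2 * P (n + 4) + P (n + 3) := by
    have := hP (n + 3); ring_nf at this ⊢; linarith
  have p6 : P (n + 6) = 2 * P (n + 5) + P (n + 4) := by
    have := hP (n + 4); ring_nf at this ⊢; linarith
  simp only [BP, mul_add, mul_smul_comm, bi_mul_bi, bi_mul_bj, bi_mul_bij,
    bj_mul_bi, bj_mul_bj, bj_mul_bij, bij_mul_bi, bij_mul_bj, bij_mul_bij, mul_one]
  have p2R : (P (n + 2) : ℝ) = 2 * P (n + 1) + P n := by exact_mod_cast p2
  have p3R : (P (n + 3) : ℝ) = 2 * P (n + 2) + P (n + 1) := by exact_mod_cast p3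
  have pqR : (P (n + 2) : ℝ) + P (n + 4) = 2 * q (n + 3) := by exact_mod_cast pq
  have p4R : (P (n + 4) : ℝ) = 2 * P (n + 3) + P (n + 2) := by exact_mod_cast p4
  have p5R : (P (n + 5) : ℝ) = 2 * P (n + 4) + P (n + 3) := by exact_mod_cast p5
  have p6R : (P (n + 6) : ℝ) = 2 * P (n + 5) + P (n + 4) := by exact_mod_cast p6
  match_scalars
  all_goals ring_nf
  all_goals ring_nf at p2R p3R pqR p4R p5R p6R
  all_goals linarith
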